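/- Let p be a prime and C_p ∈ M_{g×g}(ℤ) a matrix all of whose entries are divisible by p. Define a sequence of g×g matrices over ℚ by x_{-1} = 0, x_0 = I_g, and p·x_k - C_p·x_{k-1} + x_{k-2} = 0 for k ≥ 1. Then for every k ≥ 0, the entries of x_k lie in p^{-⌊k/2⌋} ℤ_p; equivalently, p^{⌊k/2⌋} x_k has entries in ℤ_p. -/

import Mathlib

section aux

variable {p : ℕ} [Fact p.Prime]

lemma aux_norm_p_le_one : ‖(p : ℚ_[p])‖ ≤ 1 := le_of_lt Padic.norm_p_lt_one

lemma aux_norm_mul_le_one {a b : ℚ_[p]} (ha : ‖a‖ ≤ 1) (hb : ‖b‖ ≤ 1) :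
    ‖a * b‖ ≤ 1 := by
  rw [norm_mul]
  exact mul_le_one₀ ha (norm_nonneg b) hb

lemma aux_norm_pow_mul_le_one {n : ℕ} {a : ℚ_[p]} (ha : ‖a‖ ≤ 1) :
    ‖(p : ℚ_[p]) ^ n * a‖ ≤ 1 := by
  apply aux_norm_mul_le_one _ ha
  rw [norm_pow]
  exact pow_le_one₀ (norm_nonneg _) aux_norm_p_le_one

lemma aux_mono {m n : ℕ} (hmn : m ≤ n) {a : ℚ_[p]}
    (h : ‖(p : ℚ_[p]) ^ m * a‖ ≤ 1) : ‖(p : ℚ_[p]) ^ n * a‖ ≤ 1 := by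
  have : (p : ℚ_[p]) ^ n * a = (p : ℚ_[p]) ^ (n - m) * ((p : ℚ_[p]) ^ m * a) := by
    rw [← mul_assoc, ← pow_add, Nat.sub_add_cancel hmn]
  rw [this]
  exact aux_norm_pow_mul_le_one h

lemma aux_sum_le_one {α : Type*} (s : Finset α) (f : α → ℚ_[p])
    (h : ∀ a ∈ s, ‖f a‖ ≤ 1) : ‖∑ a ∈ s, f a‖ ≤ 1 := by
  induction s using Finset.cons_induction with
  | empty => simp
  | cons a s ha ih =>
    rw [Finset.sum_cons]
    refine le_trans (Padic.nonarchimedean _ _) (max_le ?_ ?_)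
    · exact h a (Finset.mem_cons_self a s)
    · exact ih fun b hb => h b (Finset.mem_cons_of_mem hb)

end aux

/-- If all entries of `C_p` are integers divisible by `p` and the
matrices `x_k` satisfy `x_{-1} = 0`, `x_0 = 1`, `p x_k - C_p x_{k-1} + x_{k-2} = 0`,
then all entries of `p^{⌊k/2⌋} x_k` are `p`-adic integers. -/
theorem stmt1 (p g : ℕ) [Fact p.Prime]
    (Cp : Matrix (Fin g) (Fin g) ℚ_[p])
    (hCp : ∀ i j, ∃ c : ℤ, Cp i j = (p : ℚ_[p]) * (c : ℚ_[p]))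
    (x : ℕ → Matrix (Fin g) (Fin g) ℚ_[p])
    (hx0 : x 0 = 1)
    (hx1 : (p : ℚ_[p]) • x 1 = Cp)
    (hrec : ∀ k, 2 ≤ k → (p : ℚ_[p]) • x k - Cp * x (k - 1) + x (k - 2) = 0)
    (k : ℕ) (i j : Fin g) :
    ‖(p : ℚ_[p]) ^ (k / 2) * x k i j‖ ≤ 1 := by
  have hp : (p : ℚ_[p]) ≠ 0 := by
    exact_mod_cast Nat.cast_ne_zero.mpr (Fact.out : p.Prime).ne_zero
  induction k using Nat.strong_induction_on generalizing i j with
  | _ k ih =>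
    match k with
    | 0 =>
      simp only [Nat.zero_div, pow_zero, one_mul, hx0]
      by_cases hij : i = j <;> simp [Matrix.one_apply, hij]
    | 1 =>
      obtain ⟨c, hc⟩ := hCp i j
      have h1 : (p : ℚ_[p]) * x 1 i j = (p : ℚ_[p]) * (c : ℚ_[p]) := by
        rw [← hc, ← hx1]; rfl
      have h2 : x 1 i j = (c : ℚ_[p]) := mul_left_cancel₀ hp h1
      rw [show (1 : ℕ) / 2 = 0 from rfl, pow_zero, one_mul, h2]
      exact Padic.norm_int_le_one c
    | (m + 2) =>
      have hrec' := hrec (m + 2) (by omega)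
      have heq : (p : ℚ_[p]) * x (m + 2) i j
          = (∑ l, Cp i l * x (m + 1) l j) - x m i j := by
        have := congrFun (congrFun hrec' i) j
        simp only [Matrix.add_apply, Matrix.sub_apply, Matrix.smul_apply,
          Matrix.mul_apply, Matrix.zero_apply, smul_eq_mul] at this
        have h2 : (m + 2) - 1 = m + 1 := by omega
        have h3 : (m + 2) - 2 = m := by omega
        rw [h2, h3] at this
        linear_combination this
      have hsplit : (p : ℚ_[p]) ^ ((m + 2) / 2) * x (m + 2) i j
          = (∑ l, (p : ℚ_[p]) ^ (m / 2) * (Cp i l * x (m + 1) l j))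
            - (p : ℚ_[p]) ^ (m / 2) * x m i j := by
        have hdiv : (m + 2) / 2 = m / 2 + 1 := by omega
        rw [hdiv, pow_succ, mul_assoc, heq, mul_sub, Finset.mul_sum]
      rw [hsplit, sub_eq_add_neg]
      refine le_trans (Padic.nonarchimedean _ _) (max_le ?_ ?_)
      · refine aux_sum_le_one _ _ fun l _ => ?_
        obtain ⟨c, hc⟩ := hCp i l
        have : (p : ℚ_[p]) ^ (m / 2) * (Cp i l * x (m + 1) l j)
            = (c : ℚ_[p]) * ((p : ℚ_[p]) ^ (m / 2 + 1) * x (m + 1) l j) := by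
          rw [hc, pow_succ]; ring
        rw [this]
        refine aux_norm_mul_le_one (Padic.norm_int_le_one c) ?_
        exact aux_mono (by omega) (ih (m + 1) (by omega) l j)
      · rw [norm_neg]
        exact ih m (by omega) i j
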